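/- Let V be a finite nonempty set and let S be a nonempty finite set of functions V → V closed under composition, with kernel K ⊆ S (a nonempty two-sided ideal of S contained in every nonempty two-sided ideal of S). For W ∈ S, the set B = W(V) (the range of W) is an F-clique — meaning that for every pair of distinct x, y ∈ B and every U ∈ S one has U(x) ≠ U(y) — if and only if W ∈ K. -/

import Mathlib

/-- A range `B = W(V)` of an element `W` of a finite transformation semigroup `S`
with kernel `K` is an F-clique (no two distinct points of `B` are ever merged by a
word of `S`) if and only if `W` belongs to the kernel `K`. -/
theorem fClique_iff_mem_kernel {V : Type} [Fintype V] [Nonempty V]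
    (S : Set (V → V)) (hSne : S.Nonempty)
    (hSclosed : ∀ f ∈ S, ∀ g ∈ S, g ∘ f ∈ S)
    (K : Set (V → V)) (hKS : K ⊆ S) (hKne : K.Nonempty)
    (hKideal : ∀ k ∈ K, ∀ W ∈ S, k ∘ W ∈ K ∧ W ∘ k ∈ K)
    (hKmin : ∀ I : Set (V → V), I ⊆ S → I.Nonempty →
      (∀ k ∈ I, ∀ W ∈ S, k ∘ W ∈ I ∧ W ∘ k ∈ I) → K ⊆ I)
    (W : V → V) (hW : W ∈ S) :
    (∀ x ∈ Set.range W, ∀ y ∈ Set.range W, x ≠ y → ∀ U ∈ S, U x ≠ U y) ↔ W ∈ K := by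
  constructor
  · intro hF
    obtain ⟨k, hk⟩ := hKne
    set g : V → V := W ∘ k with hg
    have hgK : g ∈ K := (hKideal k hk W hW).2
    have hgS : g ∈ S := hKS hgK
    have hgrange : ∀ x, g x ∈ Set.range W := fun x => ⟨k x, rfl⟩
    have hmaps : ∀ n : ℕ, ∀ x ∈ Set.range W, g^[n] x ∈ Set.range W := by
      intro n
      induction n with
      | zero => intro x hx; simpa using hx
      | succ m ih =>
        intro x hx
        rw [Function.iterate_succ_apply]
        exact ih _ (hgrange x)
    have hinj : Set.InjOn g (Set.range W) := by
      intro a ha b hb hab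
      by_contra hne
      exact hF a ha b hb hne g hgS hab
    have hinjn : ∀ n : ℕ, Set.InjOn (g^[n]) (Set.range W) := by
      intro n
      induction n with
      | zero => simpa using Set.injOn_id _
      | succ m ih =>
        intro a ha b hb hab
        rw [Function.iterate_succ_apply, Function.iterate_succ_apply] at hab
        exact hinj ha hb (ih (hgrange a) (hgrange b) hab)
    obtain ⟨i, j, hij, heq⟩ : ∃ i j : ℕ, i < j ∧ g^[i] = g^[j] := by
      obtain ⟨a, b, hab, h⟩ :=
        Finite.exists_ne_map_eq_of_infinite (fun n : ℕ => g^[n])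
      rcases lt_or_gt_of_ne hab with h' | h'
      · exact ⟨a, b, h', h⟩
      · exact ⟨b, a, h', h.symm⟩
    have hid : ∀ x ∈ Set.range W, g^[j - i] x = x := by
      intro x hx
      apply hinjn i (hmaps _ x hx) hx
      rw [← Function.iterate_add_apply, Nat.add_sub_cancel' hij.le, ← heq]
    -- powers of g (positive) lie in K
    have hpow : ∀ m : ℕ, g^[m + 1] ∈ K := by
      intro m
      induction m with
      | zero => simpa using hgK
      | succ p ih =>
        have := (hKideal (g^[p + 1]) ih g hgS).1
        rwa [← Function.iterate_succ] at this
    obtain ⟨m, hm⟩ : ∃ m : ℕ, j - i = m + 1 := by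
      have : 1 ≤ j - i := Nat.le_sub_of_add_le (by omega)
      exact ⟨j - i - 1, by omega⟩
    have hgnK : g^[j - i] ∈ K := by rw [hm]; exact hpow m
    have hWeq : g^[j - i] ∘ W = W := by
      funext x
      exact hid (W x) ⟨x, rfl⟩
    have := (hKideal (g^[j - i]) hgnK W hW).1
    rwa [hWeq] at this
  · intro hWK x hx y hy hxy U hU hUxy
    have hUWS : U ∘ W ∈ S := hSclosed W hW U hU
    set r := (Set.range (U ∘ W)).ncard with hr
    set I : Set (V → V) := {g ∈ S | (Set.range g).ncard ≤ r} with hI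
    have hideal : ∀ k ∈ I, ∀ W' ∈ S, k ∘ W' ∈ I ∧ W' ∘ k ∈ I := by
      rintro k ⟨hkS, hkr⟩ W' hW'
      constructor
      · refine ⟨hSclosed W' hW' k hkS, ?_⟩
        have hsub : Set.range (k ∘ W') ⊆ Set.range k := Set.range_comp_subset_range _ _
        exact le_trans (Set.ncard_le_ncard hsub (Set.toFinite _)) hkr
      · refine ⟨hSclosed k hkS W' hW', ?_⟩
        have : Set.range (W' ∘ k) = W' '' Set.range k := Set.range_comp _ _
        rw [this]
        exact le_trans (Set.ncard_image_le (Set.toFinite _)) hkr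
    have hKI : K ⊆ I := hKmin I (fun g hg => hg.1) ⟨U ∘ W, hUWS, le_refl r⟩ hideal
    have hWr : (Set.range W).ncard ≤ r := (hKI hWK).2
    have himg : Set.range (U ∘ W) = U '' (Set.range W \ {y}) := by
      rw [Set.range_comp]
      apply Set.Subset.antisymm
      · rintro z ⟨w, hw, rfl⟩
        by_cases hwy : w = y
        · subst hwy
          exact ⟨x, ⟨hx, by simpa using hxy⟩, hUxy⟩
        · exact ⟨w, ⟨hw, hwy⟩, rfl⟩
      · exact Set.image_mono Set.diff_subset
    have hlt : r < (Set.range W).ncard := by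
      rw [hr, himg]
      calc (U '' (Set.range W \ {y})).ncard ≤ (Set.range W \ {y}).ncard :=
            Set.ncard_image_le (Set.toFinite _)
        _ < (Set.range W).ncard := Set.ncard_diff_singleton_lt_of_mem hy (Set.toFinite _)
    exact absurd hWr (not_le.mpr hlt)
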